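/- arXiv:2209.02373 — 2 statements merged into one kernel-verified Lean document; each statement's English description precedes it below -/
import Mathlib

section
/- Define $M(0)=01$, $M(1)=10$ extended to infinite binary sequences by concatenation, and define $\sup\nolimits^0(i_1i_2\cdots) = \sup\{i_ni_{n+1}\cdots : n \ge 1, i_n = 0\}$ (the lexicographic supremum over all tails beginning with 0). Then for every binary sequence $\mathbf{u}$ starting with the digit 0, $\sup\nolimits^0(M(\mathbf{u})) = M(\sup\nolimits^0(\mathbf{u}))$. -/
def lexLe (u v : ℕ → Bool) : Prop :=
  u = v ∨ ∃ n, (∀ k < n, u k = v k) ∧ u n < v n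

def lexLt (u v : ℕ → Bool) : Prop :=
  ∃ n, (∀ k < n, u k = v k) ∧ u n < v n

def shiftSeq (n : ℕ) (u : ℕ → Bool) : ℕ → Bool := fun k => u (n + k)

def consSeq (d : Bool) (u : ℕ → Bool) : ℕ → Bool :=
  fun k => match k with
  | 0 => d
  | k + 1 => u k

def prependSeq (m : ℕ) (d : Bool) (u : ℕ → Bool) : ℕ → Bool :=
  fun n => if n < m then d else u (n - m)

def Lsub : Bool → List Bool := fun b => cond b [true, false] [false]

def Msub : Bool → List Bool := fun b => cond b [true, false] [false, true]

def Rsub : Bool → List Bool := fun b => cond b [true] [false, true]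

/-- The image of an infinite sequence under a substitution (letterwise
concatenation); the `n`-th letter is well defined as soon as each letter image
is nonempty. -/
def subSeq (σ : Bool → List Bool) (u : ℕ → Bool) : ℕ → Bool :=
  fun n => (((List.range (n + 1)).map (fun j => σ (u j))).flatten).getD n false

/-- The set of tails of `u` beginning with the digit `0`. -/
def tails0 (u : ℕ → Bool) : Set (ℕ → Bool) := {v | ∃ n, u n = false ∧ v = shiftSeq n u}

/-- `s` is the least upper bound of `A` for the lexicographic order. -/
def isLexLUB (A : Set (ℕ → Bool)) (s : ℕ → Bool) : Prop :=
  (∀ a ∈ A, lexLe a s) ∧ ∀ t, (∀ a ∈ A, lexLe a t) → lexLe s t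

/-! ### Order lemmas -/

theorem lexLt_iff' {u v : ℕ → Bool} : lexLt u v ↔ toLex u < toLex v := Iff.rfl

theorem lexLe_iff' {u v : ℕ → Bool} : lexLe u v ↔ toLex u ≤ toLex v := by
  rw [le_iff_lt_or_eq, lexLe]
  change (u = v ∨ lexLt u v) ↔ lexLt u v ∨ toLex u = toLex v
  constructor
  · rintro (h | h)
    · exact Or.inr (congrArg toLex h)
    · exact Or.inl h
  · rintro (h | h)
    · exact Or.inr h
    · exact Or.inl (by simpa using h)

theorem lexLe_trans' {u v w : ℕ → Bool} (h1 : lexLe u v) (h2 : lexLe v w) : lexLe u w := by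
  rw [lexLe_iff'] at *; exact h1.trans h2

theorem lexLe_of_lexLt' {u v : ℕ → Bool} (h : lexLt u v) : lexLe u v := Or.inr h

theorem lexLt_of_not_lexLe' {u v : ℕ → Bool} (h : ¬ lexLe u v) : lexLt v u := by
  rw [lexLe_iff'] at h; rw [lexLt_iff']; exact lt_of_not_ge h

theorem lexLt_lexLe_absurd' {u v : ℕ → Bool} (h1 : lexLt u v) (h2 : lexLe v u) : False := by
  rw [lexLt_iff'] at h1; rw [lexLe_iff'] at h2; exact absurd h2 (not_le_of_gt h1)

/-! ### Computation of `subSeq Msub` -/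

theorem Msub_join_succ (u : ℕ → Bool) (n : ℕ) :
    ((List.range (n+1)).map (fun j => Msub (u j))).flatten
      = ((List.range n).map (fun j => Msub (u j))).flatten ++ Msub (u n) := by
  simp [List.range_succ]

theorem Msub_join_length (u : ℕ → Bool) (n : ℕ) :
    (((List.range n).map (fun j => Msub (u j))).flatten).length = 2 * n := by
  induction n with
  | zero => simp
  | succ n ih =>
    rw [Msub_join_succ, List.length_append, ih]
    cases u n <;> simp [Msub] <;> ring

theorem getD_join_eq (u : ℕ → Bool) (m : ℕ) : ∀ n, m < 2*n →
    (((List.range n).map (fun j => Msub (u j))).flatten).getD m false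
      = (Msub (u (m/2))).getD (m % 2) false := by
  intro n
  induction n with
  | zero => omega
  | succ n ih =>
    intro hm
    rw [Msub_join_succ]
    rcases lt_or_ge m (2*n) with h | h
    · rw [List.getD_append _ _ _ _ (by rw [Msub_join_length]; exact h)]
      exact ih h
    · rw [List.getD_append_right _ _ _ _ (by rw [Msub_join_length]; exact h)]
      rw [Msub_join_length]
      have h2 : m / 2 = n := by omega
      have h3 : m - 2*n = m % 2 := by omega
      rw [h2, h3]

theorem subSeq_Msub_apply (u : ℕ → Bool) (m : ℕ) :
    subSeq Msub u m = (Msub (u (m/2))).getD (m % 2) false := by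
  rw [subSeq]
  exact getD_join_eq u m (m+1) (by omega)

theorem subSeqM_even (u : ℕ → Bool) (k : ℕ) : subSeq Msub u (2*k) = u k := by
  rw [subSeq_Msub_apply]
  have h1 : (2*k)/2 = k := by omega
  have h2 : (2*k) % 2 = 0 := by omega
  rw [h1, h2]
  cases u k <;> simp [Msub]

theorem subSeqM_odd (u : ℕ → Bool) (k : ℕ) : subSeq Msub u (2*k+1) = !(u k) := by
  rw [subSeq_Msub_apply]
  have h1 : (2*k+1)/2 = k := by omega
  have h2 : (2*k+1) % 2 = 1 := by omega
  rw [h1, h2]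
  cases u k <;> simp [Msub]

theorem Mshift (u : ℕ → Bool) (a n : ℕ) :
    subSeq Msub u (2*a + n) = subSeq Msub (shiftSeq a u) n := by
  obtain ⟨q, h | h⟩ : ∃ q, n = 2*q ∨ n = 2*q+1 := ⟨n/2, by omega⟩
  · subst h
    have e : 2*a + 2*q = 2*(a + q) := by omega
    rw [e, subSeqM_even, subSeqM_even]
    rfl
  · subst h
    have e : 2*a + (2*q+1) = 2*(a + q) + 1 := by omega
    rw [e, subSeqM_odd, subSeqM_odd]
    rfl

/-! ### Monotonicity of `M` -/

theorem M_mono_lt {v w : ℕ → Bool} (h : lexLt v w) :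
    lexLt (subSeq Msub v) (subSeq Msub w) := by
  obtain ⟨n, hpre, hlt⟩ := h
  rw [Bool.lt_iff] at hlt
  refine ⟨2*n, ?_, ?_⟩
  · intro k hk
    have : k = 2*(k/2) ∨ k = 2*(k/2)+1 := by omega
    rcases this with h | h
    · rw [h, subSeqM_even, subSeqM_even, hpre (k/2) (by omega)]
    · rw [h, subSeqM_odd, subSeqM_odd, hpre (k/2) (by omega)]
  · rw [subSeqM_even, subSeqM_even, hlt.1, hlt.2]
    exact Bool.false_lt_true

theorem M_mono_le {v w : ℕ → Bool} (h : lexLe v w) :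
    lexLe (subSeq Msub v) (subSeq Msub w) := by
  rcases h with h | h
  · exact Or.inl (congrArg _ h)
  · exact Or.inr (M_mono_lt h)

/-! ### Key combinatorial lemmas -/

/-- Lemma B: `0 · M(w) < M(0 · w)`. -/
theorem consM_lt_Mcons (w : ℕ → Bool) :
    lexLt (consSeq false (subSeq Msub w)) (subSeq Msub (consSeq false w)) := by
  have hR0 : subSeq Msub (consSeq false w) 0 = false := by
    have := subSeqM_even (consSeq false w) 0
    simpa [consSeq] using this
  have hR1 : subSeq Msub (consSeq false w) 1 = true := by
    have := subSeqM_odd (consSeq false w) 0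
    simpa [consSeq] using this
  have hR2 : subSeq Msub (consSeq false w) 2 = w 0 := by
    have := subSeqM_even (consSeq false w) 1
    simpa [consSeq] using this
  have hL1 : consSeq false (subSeq Msub w) 1 = w 0 := by
    have := subSeqM_even w 0
    simpa [consSeq] using this
  have hL2 : consSeq false (subSeq Msub w) 2 = !(w 0) := by
    have := subSeqM_odd w 0
    simpa [consSeq] using this
  cases hw : w 0 with
  | false =>
    refine ⟨1, ?_, ?_⟩
    · intro k hk
      interval_cases k
      · rw [hR0]; rfl
    · rw [hL1, hR1, hw]; exact Bool.false_lt_true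
  | true =>
    refine ⟨2, ?_, ?_⟩
    · intro k hk
      interval_cases k
      · rw [hR0]; rfl
      · rw [hL1, hR1, hw]
    · rw [hL2, hR2, hw]; exact Bool.false_lt_true

/-- `0 · t ≤ t` when `t` starts with `0`. -/
theorem cons_le_self {t : ℕ → Bool} (h : t 0 = false) : lexLe (consSeq false t) t := by
  by_cases hall : ∀ n, t n = false
  · left
    funext k
    cases k with
    | zero => rw [hall 0]; rfl
    | succ j => show t j = t (j+1); rw [hall j, hall (j+1)]
  · push_neg at hall
    have hex : ∃ n, t n = true := by
      obtain ⟨n, hn⟩ := hall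
      exact ⟨n, by revert hn; cases t n <;> simp⟩
    obtain ⟨n, hnt, hmin⟩ : ∃ n, t n = true ∧ ∀ m < n, t m = false :=
      ⟨Nat.find hex, Nat.find_spec hex, fun m hm => by
        have := Nat.find_min hex hm; revert this; cases t m <;> simp⟩
    have hn0 : n ≠ 0 := fun h' => by rw [h'] at hnt; rw [h] at hnt; exact Bool.noConfusion hnt
    obtain ⟨j, rfl⟩ : ∃ j, n = j + 1 := ⟨n - 1, by omega⟩
    right
    refine ⟨j+1, ?_, ?_⟩
    · intro k hk
      cases k with
      | zero => exact h.symm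
      | succ i =>
        show t i = t (i+1)
        rw [hmin i (by omega), hmin (i+1) hk]
    · show t j < t (j+1)
      rw [hmin j (by omega), hnt]
      exact Bool.false_lt_true

/-- The crucial claim: if `u k = 1` then `0 · (shift (k+1) u) ≤ s` for any upper
bound `s` of `tails0 u`. -/
theorem claim_le (u s : ℕ → Bool) (h0 : u 0 = false)
    (hub : ∀ a ∈ tails0 u, lexLe a s) (k : ℕ) (hk : u k = true) :
    lexLe (consSeq false (shiftSeq (k+1) u)) s := by
  classical
  obtain ⟨p, hp, hpk, hmid⟩ :
      ∃ p, u p = false ∧ p ≤ k ∧ ∀ j, p < j → j ≤ k → u j = true := by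
    refine ⟨Nat.findGreatest (fun j => u j = false) k,
      Nat.findGreatest_spec (P := fun j => u j = false) (Nat.zero_le k) h0, Nat.findGreatest_le k, ?_⟩
    intro j h1 h2
    have := Nat.findGreatest_is_greatest h1 h2
    revert this; cases u j <;> simp
  have hpk' : p < k := lt_of_le_of_ne hpk (fun h => by rw [h, hk] at hp; exact Bool.noConfusion hp)
  by_cases hex : ∃ m, k < m ∧ u m = false
  · obtain ⟨m, hm1, hm2, hmmin⟩ :
        ∃ m, k < m ∧ u m = false ∧ ∀ j, k < j → j < m → u j = true := by
      refine ⟨Nat.find hex, (Nat.find_spec hex).1, (Nat.find_spec hex).2, ?_⟩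
      intro j h1 h2
      have h3 := Nat.find_min hex h2
      simp only [not_and] at h3
      have h4 := h3 h1
      revert h4; cases u j <;> simp
    have hone : ∀ j, p < j → j < m → u j = true := by
      intro j h1 h2
      rcases le_or_gt j k with h | h
      · exact hmid j h1 h
      · exact hmmin j h h2
    rcases eq_or_lt_of_le (show k + 1 ≤ m by omega) with heq | hlt
    · -- m = k + 1
      have hsm : shiftSeq m u ∈ tails0 u := ⟨m, hm2, rfl⟩
      have h1 : lexLe (consSeq false (shiftSeq m u)) (shiftSeq m u) := by
        apply cons_le_self
        show u (m + 0) = false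
        simpa using hm2
      rw [heq]
      exact lexLe_trans' h1 (hub _ hsm)
    · -- m > k + 1
      have hsp : shiftSeq p u ∈ tails0 u := ⟨p, hp, rfl⟩
      refine lexLe_trans' (lexLe_of_lexLt' ?_) (hub _ hsp)
      refine ⟨m - k, ?_, ?_⟩
      · intro j hj
        cases j with
        | zero =>
          show false = u (p + 0)
          simpa using hp.symm
        | succ i =>
          show u (k + 1 + i) = u (p + (i+1))
          rw [hone (k+1+i) (by omega) (by omega), hone (p+(i+1)) (by omega) (by omega)]
      · have e1 : m - k = (m - k - 1) + 1 := by omega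
        rw [e1]
        show u (k + 1 + (m - k - 1)) < u (p + ((m - k - 1) + 1))
        have e2 : k + 1 + (m - k - 1) = m := by omega
        rw [e2, hm2, hone (p + ((m - k - 1) + 1)) (by omega) (by omega)]
        exact Bool.false_lt_true
  · -- all letters after position k are 1
    push_neg at hex
    have hall : ∀ j, p < j → u j = true := by
      intro j h1
      rcases le_or_gt j k with h | h
      · exact hmid j h1 h
      · have h4 := hex j h
        revert h4; cases u j <;> simp
    have heq : consSeq false (shiftSeq (k+1) u) = shiftSeq p u := by
      funext j
      cases j with
      | zero =>
        show false = u (p + 0)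
        simpa using hp.symm
      | succ i =>
        show u (k + 1 + i) = u (p + (i+1))
        rw [hall (k+1+i) (by omega), hall (p+(i+1)) (by omega)]
    rw [heq]
    exact hub _ ⟨p, hp, rfl⟩

/-! ### Approximation lemma -/

theorem lub_approx (A : Set (ℕ → Bool)) (s : ℕ → Bool) (hA : A.Nonempty)
    (hs : isLexLUB A s) : ∀ n, ∃ v ∈ A, ∀ k < n, v k = s k := by
  classical
  intro n
  induction n with
  | zero =>
    obtain ⟨v, hv⟩ := hA
    exact ⟨v, hv, by omega⟩
  | succ n ih =>
    by_cases hgood : ∃ v ∈ A, ∀ k < n + 1, v k = s k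
    · exact hgood
    have key : ∀ a ∈ A, (∀ k < n, a k = s k) → a n = false ∧ s n = true := by
      intro a ha hpre
      rcases hs.1 a ha with heq | ⟨d, hd, hlt⟩
      · exact absurd ⟨a, ha, fun k _ => by rw [heq]⟩ hgood
      · rw [Bool.lt_iff] at hlt
        rcases lt_trichotomy d n with h | h | h
        · rw [hpre d h, hlt.2] at hlt
          exact absurd hlt.1 (by simp)
        · rw [← h]; exact hlt
        · exact absurd ⟨a, ha, fun k hk => if h' : k < n then hpre k h' else hd k (by omega)⟩
            hgood
    obtain ⟨v, hvA, hvpre⟩ := ih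
    have hsn : s n = true := (key v hvA hvpre).2
    set t : ℕ → Bool := fun j => if j < n then s j else if j = n then false else true with ht_def
    have ht : ∀ a ∈ A, lexLe a t := by
      intro a ha
      by_cases hpre : ∀ k < n, a k = s k
      · have han : a n = false := (key a ha hpre).1
        by_cases haeq : a = t
        · exact Or.inl haeq
        have hne : ∃ j, a j ≠ t j := Function.ne_iff.mp haeq
        set j := Nat.find hne with hj_def
        have hjne : a j ≠ t j := Nat.find_spec hne
        have hjmin : ∀ i < j, a i = t i := by
          intro i hi
          have := Nat.find_min hne hi
          simpa using this
        have hj_gt : n < j := by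
          rcases lt_trichotomy j n with h | h | h
          · exact absurd (by rw [hpre j h]; simp [ht_def, h]) hjne
          · exact absurd (by rw [h, han]; simp [ht_def]) hjne
          · exact h
        have htj : t j = true := by
          simp [ht_def, show ¬ j < n by omega, show j ≠ n by omega]
        have haj : a j = false := by
          revert hjne; rw [htj]; cases a j <;> simp
        exact Or.inr ⟨j, hjmin, by rw [haj, htj]; exact Bool.false_lt_true⟩
      · push_neg at hpre
        obtain ⟨k0, hk0, hk0ne⟩ := hpre
        rcases hs.1 a ha with heq | ⟨d, hd, hlt⟩
        · exact absurd (by rw [heq]) hk0ne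
        have hdn : d < n := by
          by_contra h
          exact hk0ne (hd k0 (by omega))
        refine Or.inr ⟨d, ?_, ?_⟩
        · intro i hi
          rw [hd i hi]
          simp [ht_def, show i < n by omega]
        · have : t d = s d := by simp [ht_def, hdn]
          rw [this]; exact hlt
    have hst : lexLe s t := hs.2 t ht
    exfalso
    refine lexLt_lexLe_absurd' (u := t) (v := s) ⟨n, ?_, ?_⟩ hst
    · intro k hk; simp [ht_def, hk]
    · rw [hsn]
      have : t n = false := by simp [ht_def]
      rw [this]; exact Bool.false_lt_true

/-- `M` commutes with `sup⁰` on sequences starting with `0`. -/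
theorem stmt7 (u s : ℕ → Bool) (h0 : u 0 = false) (hs : isLexLUB (tails0 u) s) :
    isLexLUB (tails0 (subSeq Msub u)) (subSeq Msub s) := by
  classical
  constructor
  · -- upper bound
    rintro a ⟨m, hm, rfl⟩
    have hsplit : m = 2*(m/2) ∨ m = 2*(m/2)+1 := by omega
    set k := m / 2 with hk_def
    rcases hsplit with h | h
    · -- even tail
      have hk : u k = false := by rw [h, subSeqM_even] at hm; exact hm
      have heq : shiftSeq m (subSeq Msub u) = subSeq Msub (shiftSeq k u) := by
        funext j
        show subSeq Msub u (m + j) = _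
        rw [h]
        exact Mshift u k j
      rw [heq]
      exact M_mono_le (hs.1 _ ⟨k, hk, rfl⟩)
    · -- odd tail
      have hk : u k = true := by
        rw [h, subSeqM_odd] at hm
        revert hm; cases u k <;> simp
      have heq : shiftSeq m (subSeq Msub u)
          = consSeq false (subSeq Msub (shiftSeq (k+1) u)) := by
        funext j
        cases j with
        | zero =>
          show subSeq Msub u (m + 0) = false
          rw [Nat.add_zero, h, subSeqM_odd, hk]
          rfl
        | succ i =>
          show subSeq Msub u (m + (i+1)) = subSeq Msub (shiftSeq (k+1) u) i
          have e : m + (i + 1) = 2*(k+1) + i := by omega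
          rw [e]
          exact Mshift u (k+1) i
      rw [heq]
      exact lexLe_trans' (lexLe_of_lexLt' (consM_lt_Mcons _))
        (M_mono_le (claim_le u s h0 hs.1 k hk))
  · -- least upper bound
    intro t ht
    by_contra hle
    obtain ⟨n, hpre, hn⟩ := lexLt_of_not_lexLe' hle
    obtain ⟨v, hv, hvpre⟩ := lub_approx (tails0 u) s ⟨shiftSeq 0 u, 0, h0, rfl⟩ hs (n+1)
    have hagree : ∀ k ≤ n, subSeq Msub v k = subSeq Msub s k := by
      intro k hk
      rw [subSeq_Msub_apply, subSeq_Msub_apply, hvpre (k/2) (by omega)]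
    obtain ⟨a, ha, rfl⟩ := hv
    have hmem : subSeq Msub (shiftSeq a u) ∈ tails0 (subSeq Msub u) := by
      refine ⟨2*a, by rw [subSeqM_even]; exact ha, ?_⟩
      funext j
      exact (Mshift u a j).symm
    refine lexLt_lexLe_absurd' (u := t) (v := subSeq Msub (shiftSeq a u)) ⟨n, ?_, ?_⟩
      (ht _ hmem)
    · intro k hk
      rw [hpre k hk, hagree k (le_of_lt hk)]
    · rw [hagree n le_rfl]
      exact hn
end

section
/- Let $\sigma$ be a substitution on $\{0,1\}$ (acting on infinite sequences letterwise) such that $\sigma(0) = 01w$ and $\sigma(1) = 10w$ for some finite word $w$. Let $q_0, q_1 > 1$ be real numbers such that $q_1 \cdot \pi_{q_0,q_1}(\sigma(\overline{0})) = 1$ and $q_1 \le 1 + \tilde\pi_{q_0,q_1}(\overline{w01})$, where $\pi_{q_0,q_1}(i_1i_2\cdots) = \sum_k i_k/(q_{i_1}\cdots q_{i_k})$ and $\tilde\pi_{q_0,q_1}(i_1i_2\cdots) = \sum_k (1-i_k)/(q_{i_1}\cdots q_{i_k})$. Then $(q_0-1)(q_1-1) \le \frac{1}{2}$. -/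
noncomputable def piR (q0 q1 : ℝ) (i : ℕ → Bool) : ℝ :=
  ∑' k : ℕ, (cond (i k) 1 0 : ℝ) / ∏ j ∈ Finset.range (k + 1), (cond (i j) q1 q0)

noncomputable def tpiR (q0 q1 : ℝ) (i : ℕ → Bool) : ℝ :=
  ∑' k : ℕ, (cond (i k) 0 1 : ℝ) / ∏ j ∈ Finset.range (k + 1), (cond (i j) q1 q0)

/-- The periodic sequence obtained by repeating the finite word `l`. -/
def perSeq (l : List Bool) : ℕ → Bool := fun n => l.getD (n % l.length) false

section helpers

variable {q0 q1 : ℝ}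

lemma cond_gt_one (h0 : 1 < q0) (h1 : 1 < q1) (b : Bool) : 1 < cond b q1 q0 := by
  cases b <;> simpa

lemma prodC_pos (h0 : 1 < q0) (h1 : 1 < q1) (i : ℕ → Bool) (k : ℕ) :
    0 < ∏ j ∈ Finset.range k, (cond (i j) q1 q0) :=
  Finset.prod_pos fun j _ => lt_trans one_pos (cond_gt_one h0 h1 (i j))

lemma prodC_ge (h0 : 1 < q0) (h1 : 1 < q1) (i : ℕ → Bool) (k : ℕ) :
    (min q0 q1) ^ k ≤ ∏ j ∈ Finset.range k, (cond (i j) q1 q0) := by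
  calc (min q0 q1) ^ k = ∏ j ∈ Finset.range k, min q0 q1 := by
        rw [Finset.prod_const, Finset.card_range]
    _ ≤ _ := by
        apply Finset.prod_le_prod
        · intro j _; positivity
        · intro j _; cases i j <;> simp [min_le_left, min_le_right]

lemma inv_prodC_le (h0 : 1 < q0) (h1 : 1 < q1) (i : ℕ → Bool) (k : ℕ) :
    (∏ j ∈ Finset.range k, (cond (i j) q1 q0))⁻¹ ≤ ((min q0 q1)⁻¹) ^ k := by
  rw [inv_pow]
  have hm0 : (0:ℝ) < min q0 q1 := lt_min (by linarith) (by linarith)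
  exact inv_anti₀ (by positivity) (prodC_ge h0 h1 i k)

lemma summable_invP (h0 : 1 < q0) (h1 : 1 < q1) (i : ℕ → Bool) :
    Summable (fun k => (∏ j ∈ Finset.range (k + 1), (cond (i j) q1 q0))⁻¹) := by
  have hm : 1 < min q0 q1 := lt_min h0 h1
  have hgeo : Summable (fun k : ℕ => ((min q0 q1)⁻¹) ^ (k + 1)) := by
    apply Summable.comp_injective _ (add_left_injective 1)
    have hm0 : (0:ℝ) < min q0 q1 := lt_trans one_pos hm
    exact summable_geometric_of_lt_one (by positivity) (by
      rw [inv_lt_one_iff₀]; right; exact hm)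
  refine Summable.of_nonneg_of_le
    (fun k => le_of_lt (inv_pos.2 (prodC_pos h0 h1 i (k+1)))) (fun k => ?_) hgeo
  exact inv_prodC_le h0 h1 i (k + 1)

lemma summable_piTerm (h0 : 1 < q0) (h1 : 1 < q1) (i : ℕ → Bool) (x y : Bool) :
    Summable (fun k => (cond (i k) (cond x 1 0) (cond y 1 0) : ℝ) /
      ∏ j ∈ Finset.range (k + 1), (cond (i j) q1 q0)) := by
  refine Summable.of_nonneg_of_le (fun k => ?_) (fun k => ?_) (summable_invP h0 h1 i)
  · apply div_nonneg _ (le_of_lt (prodC_pos h0 h1 i (k+1)))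
    cases i k <;> cases x <;> cases y <;> norm_num
  · have hp := prodC_pos h0 h1 i (k + 1)
    rw [div_eq_mul_inv]
    calc (cond (i k) (cond x 1 0) (cond y 1 0) : ℝ) *
          (∏ j ∈ Finset.range (k + 1), (cond (i j) q1 q0))⁻¹
        ≤ 1 * (∏ j ∈ Finset.range (k + 1), (cond (i j) q1 q0))⁻¹ := by
          apply mul_le_mul_of_nonneg_right _ (by positivity)
          cases i k <;> cases x <;> cases y <;> norm_num
      _ = _ := one_mul _

lemma summable_pi (h0 : 1 < q0) (h1 : 1 < q1) (i : ℕ → Bool) :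
    Summable (fun k => (cond (i k) 1 0 : ℝ) /
      ∏ j ∈ Finset.range (k + 1), (cond (i j) q1 q0)) := by
  simpa using summable_piTerm h0 h1 i true false

lemma summable_tpi (h0 : 1 < q0) (h1 : 1 < q1) (i : ℕ → Bool) :
    Summable (fun k => (cond (i k) 0 1 : ℝ) /
      ∏ j ∈ Finset.range (k + 1), (cond (i j) q1 q0)) := by
  simpa using summable_piTerm h0 h1 i false true

/-- Key identity: (q1-1) π + (q0-1) τ = 1. -/
lemma pi_tpi_identity (h0 : 1 < q0) (h1 : 1 < q1) (i : ℕ → Bool) :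
    (q1 - 1) * piR q0 q1 i + (q0 - 1) * tpiR q0 q1 i = 1 := by
  set c : ℕ → ℝ := fun j => cond (i j) q1 q0 with hc
  set f : ℕ → ℝ := fun k => (∏ j ∈ Finset.range k, c j)⁻¹ with hf
  have hπ := summable_pi h0 h1 i
  have hτ := summable_tpi h0 h1 i
  have hpt : ∀ k, (q1 - 1) * ((cond (i k) 1 0 : ℝ) / ∏ j ∈ Finset.range (k + 1), c j)
      + (q0 - 1) * ((cond (i k) 0 1 : ℝ) / ∏ j ∈ Finset.range (k + 1), c j)
      = f k - f (k + 1) := by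
    intro k
    have hp : (0:ℝ) < ∏ j ∈ Finset.range k, c j := prodC_pos h0 h1 i k
    have hck : (0:ℝ) < c k := lt_trans one_pos (cond_gt_one h0 h1 (i k))
    have hprod : ∏ j ∈ Finset.range (k + 1), c j = (∏ j ∈ Finset.range k, c j) * c k :=
      Finset.prod_range_succ c k
    simp only [hf, hprod]
    cases hik : i k <;> simp only [hc, hik, cond_false, cond_true] <;>
      field_simp <;> ring
  -- the combined series
  have hsum : HasSum (fun k => f k - f (k + 1)) 1 := by
    have hsummable : Summable (fun k => f k - f (k + 1)) := by
      refine Summable.of_nonneg_of_le (fun k => ?_) (fun k => ?_)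
        ((summable_geometric_of_lt_one (by
            have hm0 : (0:ℝ) < min q0 q1 := lt_min (by linarith) (by linarith); positivity)
          (by rw [inv_lt_one_iff₀]; right; exact lt_min h0 h1) :
            Summable fun k : ℕ => ((min q0 q1)⁻¹) ^ k))
      · have hp := prodC_pos h0 h1 i k
        have hck : (1:ℝ) < c k := cond_gt_one h0 h1 (i k)
        have h1' : f (k+1) ≤ f k := by
          apply inv_anti₀ hp
          rw [Finset.prod_range_succ]
          nlinarith
        linarith
      · have : f k ≤ ((min q0 q1)⁻¹) ^ k := inv_prodC_le h0 h1 i k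
        have h2 : 0 ≤ f (k + 1) := le_of_lt (by
          have := prodC_pos h0 h1 i (k+1); positivity)
        linarith
    have htend : Filter.Tendsto (fun n => ∑ k ∈ Finset.range n, (f k - f (k + 1)))
        Filter.atTop (nhds 1) := by
      have hps : ∀ n, ∑ k ∈ Finset.range n, (f k - f (k + 1)) = f 0 - f n := by
        intro n; exact Finset.sum_range_sub' f n
      simp only [hps]
      have hf0 : f 0 = 1 := by simp [hf]
      have hfn : Filter.Tendsto f Filter.atTop (nhds 0) := by
        apply squeeze_zero (fun n => le_of_lt (by
          have := prodC_pos h0 h1 i n; positivity))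
          (fun n => inv_prodC_le h0 h1 i n)
        have hm0 : (0:ℝ) < min q0 q1 := lt_min (by linarith) (by linarith)
        exact tendsto_pow_atTop_nhds_zero_of_lt_one (by positivity)
          (by rw [inv_lt_one_iff₀]; right; exact lt_min h0 h1)
      have := Filter.Tendsto.const_sub (1:ℝ) hfn
      simpa [hf0] using this
    have := hsummable.hasSum.tendsto_sum_nat
    have heq1 : ∑' k, (f k - f (k + 1)) = 1 :=
      tendsto_nhds_unique this htend
    exact heq1 ▸ hsummable.hasSum
  calc (q1 - 1) * piR q0 q1 i + (q0 - 1) * tpiR q0 q1 i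
      = ∑' k, ((q1 - 1) * ((cond (i k) 1 0 : ℝ) / ∏ j ∈ Finset.range (k + 1), c j)
        + (q0 - 1) * ((cond (i k) 0 1 : ℝ) / ∏ j ∈ Finset.range (k + 1), c j)) := by
        rw [piR, tpiR, ← tsum_mul_left, ← tsum_mul_left,
          Summable.tsum_add (hπ.mul_left _) (hτ.mul_left _)]
    _ = ∑' k, (f k - f (k + 1)) := by
        exact tsum_congr hpt
    _ = 1 := hsum.tsum_eq

end helpers

lemma getD_join_replicate (l : List Bool) (hl : 0 < l.length) :
    ∀ m n, n < m * l.length → ((List.replicate m l).flatten).getD n false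
      = l.getD (n % l.length) false := by
  intro m
  induction m with
  | zero => intro n hn; simp at hn
  | succ m ih =>
    intro n hn
    rw [List.replicate_succ,
      show (l :: List.replicate m l).flatten = l ++ (List.replicate m l).flatten from rfl]
    rcases lt_or_ge n l.length with h | h
    · rw [List.getD_append _ _ _ _ h, Nat.mod_eq_of_lt h]
    · rw [List.getD_append_right _ _ _ _ h, Nat.mod_eq_sub_mod h]
      have hsm : (m + 1) * l.length = m * l.length + l.length := Nat.succ_mul m l.length
      exact ih _ (by omega)

lemma subSeq_const (σ : Bool → List Bool) (hσ : 0 < (σ false).length) (n : ℕ) :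
    subSeq σ (fun _ => false) n = (σ false).getD (n % (σ false).length) false := by
  have hmap : ((List.range (n + 1)).map (fun j => σ ((fun _ => false) j)))
      = List.replicate (n + 1) (σ false) := by
    simp [List.map_const']
  rw [subSeq, hmap]
  apply getD_join_replicate _ hσ
  calc n < n + 1 := Nat.lt_succ_self n
    _ = (n+1) * 1 := (mul_one _).symm
    _ ≤ (n+1) * (σ false).length := Nat.mul_le_mul_left _ hσ

lemma rotGetD (w : List Bool) (n : ℕ) :
    (([false, true] ++ w).getD ((n + 2) % (w.length + 2)) false)
      = (w ++ [false, true]).getD (n % (w.length + 2)) false := by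
  set L := w.length + 2 with hL
  have hLpos : 0 < L := by omega
  have hr : n % L < L := Nat.mod_lt _ hLpos
  have h2 : (n + 2) % L = (n % L + 2) % L := by
    conv_lhs => rw [Nat.add_mod]
    conv_rhs => rw [Nat.add_mod, Nat.mod_mod_of_dvd n (dvd_refl L)]
  rw [h2]
  generalize hgen : n % L = r at hr ⊢
  have hw2 : ([false, true] : List Bool).length = 2 := rfl
  rcases lt_trichotomy r w.length with h | h | h
  · have hmod : (r + 2) % L = r + 2 := Nat.mod_eq_of_lt (by omega)
    rw [hmod, List.getD_append_right _ _ _ _ (by simp), List.getD_append _ _ _ _ h]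
    simp
  · have hmod : (r + 2) % L = 0 := by
      rw [h]; simp [hL, Nat.add_comm]
    rw [hmod, List.getD_append _ _ _ _ (by simp),
      List.getD_append_right _ _ _ _ (by omega)]
    simp [h]
  · have hr' : r = w.length + 1 := by omega
    have hmod : (r + 2) % L = 1 := by
      rw [hr']
      have : w.length + 1 + 2 = L + 1 := by omega
      rw [this, Nat.add_mod_left, Nat.mod_eq_of_lt (by omega)]
    rw [hmod, List.getD_append _ _ _ _ (by simp),
      List.getD_append_right _ _ _ _ (by omega)]
    simp [hr']

lemma piR_shift2 (q0 q1 : ℝ) (h0 : 1 < q0) (h1 : 1 < q1) (s : ℕ → Bool)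
    (hs0 : s 0 = false) (hs1 : s 1 = true) :
    piR q0 q1 s = (q0 * q1)⁻¹ * (1 + piR q0 q1 (fun n => s (n + 2))) := by
  have hq : (0:ℝ) < q0 * q1 := by nlinarith
  set a : ℕ → ℝ := fun k => (cond (s k) 1 0 : ℝ) /
    ∏ j ∈ Finset.range (k + 1), (cond (s j) q1 q0) with ha_def
  have ha : Summable a := summable_pi h0 h1 s
  have ha1 : Summable (fun k => a (k + 1)) := (summable_nat_add_iff 1).2 ha
  have hstep : ∀ k : ℕ, a (k + 2) = (q0 * q1)⁻¹ *
      ((cond (s (k + 2)) 1 0 : ℝ) /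
        ∏ j ∈ Finset.range (k + 1), (cond (s (j + 2)) q1 q0)) := by
    intro k
    have hprod : ∏ j ∈ Finset.range (k + 3), (cond (s j) q1 q0)
        = ((∏ j ∈ Finset.range (k + 1), (cond (s (j + 2)) q1 q0)) * (cond (s 1) q1 q0))
          * (cond (s 0) q1 q0) := by
      rw [Finset.prod_range_succ' _ (k + 2), Finset.prod_range_succ' _ (k + 1)]
    have hp : (0:ℝ) < ∏ j ∈ Finset.range (k + 1), (cond (s (j + 2)) q1 q0) :=
      prodC_pos h0 h1 (fun n => s (n + 2)) (k + 1)
    simp only [ha_def]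
    rw [show k + 2 + 1 = k + 3 from rfl, hprod, hs0, hs1]
    simp only [cond_false, cond_true]
    field_simp
  calc piR q0 q1 s = ∑' k, a k := rfl
    _ = a 0 + ∑' k, a (k + 1) := Summable.tsum_eq_zero_add ha
    _ = a 0 + (a 1 + ∑' k, a (k + 1 + 1)) := by rw [Summable.tsum_eq_zero_add ha1]
    _ = (q0 * q1)⁻¹ + (q0 * q1)⁻¹ * piR q0 q1 (fun n => s (n + 2)) := by
        have h0' : a 0 = 0 := by simp [ha_def, hs0]
        have h1' : a 1 = (q0 * q1)⁻¹ := by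
          simp [ha_def, Finset.prod_range_succ, hs0, hs1]
        rw [h0', h1', piR, ← tsum_mul_left, zero_add]
        congr 1
        exact tsum_congr fun k => hstep k
    _ = (q0 * q1)⁻¹ * (1 + piR q0 q1 (fun n => s (n + 2))) := by ring

theorem stmt19 (σ : Bool → List Bool) (w : List Bool)
    (hσ0 : σ false = [false, true] ++ w) (hσ1 : σ true = [true, false] ++ w)
    (q0 q1 : ℝ) (h0 : 1 < q0) (h1 : 1 < q1)
    (heq : q1 * piR q0 q1 (subSeq σ (fun _ => false)) = 1)
    (hle : q1 ≤ 1 + tpiR q0 q1 (perSeq (w ++ [false, true]))) :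
    (q0 - 1) * (q1 - 1) ≤ 1 / 2 := by
  have hσlen : 0 < (σ false).length := by rw [hσ0]; simp
  have hlen1 : ([false, true] ++ w).length = w.length + 2 := by
    simp
  have hlen2 : (w ++ [false, true]).length = w.length + 2 := by simp
  set s := subSeq σ (fun _ => false) with hs_def
  have hsgen : ∀ n, s n = ([false, true] ++ w).getD (n % (w.length + 2)) false := by
    intro n
    rw [hs_def, subSeq_const σ hσlen n, hσ0, hlen1]
  have hs0 : s 0 = false := by
    rw [hsgen, Nat.mod_eq_of_lt (by omega)]; rfl
  have hs1 : s 1 = true := by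
    rw [hsgen, Nat.mod_eq_of_lt (by omega)]; rfl
  have hshift : (fun n => s (n + 2)) = perSeq (w ++ [false, true]) := by
    funext n
    rw [hsgen, perSeq, hlen2]
    have h2 : (n + 2) % (w.length + 2) = (n + 2) % (w.length + 2) := rfl
    exact rotGetD w n
  have hπs := piR_shift2 q0 q1 h0 h1 s hs0 hs1
  rw [hshift] at hπs
  set u := perSeq (w ++ [false, true]) with hu
  have hq0 : (0:ℝ) < q0 := by linarith
  have hq1 : (0:ℝ) < q1 := by linarith
  have hπu : piR q0 q1 u = q0 - 1 := by
    rw [hπs] at heq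
    field_simp at heq
    nlinarith [heq]
  have hid := pi_tpi_identity h0 h1 u
  rw [hπu] at hid
  have htle : q1 - 1 ≤ tpiR q0 q1 u := by linarith
  nlinarith [htle, hid, sub_pos.2 h0, sub_pos.2 h1]
end
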